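/- Under Assumption (C): let E* ∈ J and let θ₋ := f₋^{−1}(E*) ∈ I₋ and θ₊ := f₊^{−1}(E*) ∈ I₊. If ‖T_f(E*)‖_𝕋 ≥ 7ν/d, then |f′(θ₋)| ≥ ν and |f′(θ₊)| ≥ ν. -/

import Mathlib

/-- Distance from a real number to the nearest integer, `‖x‖_𝕋`. -/
noncomputable def torusNorm (x : ℝ) : ℝ := |x - round x|

lemma torusNorm_le_abs (x : ℝ) : torusNorm x ≤ |x| := by
  unfold torusNorm
  rcases le_or_gt (1/2) |x| with h | h
  · exact (abs_sub_round x).trans h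
  · have hx1 : -(1/2) < x := by cases abs_lt.1 h; linarith
    have hx2 : x < 1/2 := by cases abs_lt.1 h; linarith
    have : round x = 0 := by
      rw [round_eq, Int.floor_eq_zero_iff]
      constructor <;> simp <;> linarith
    simp [this]

lemma no_dip_neg (d ν : ℝ) (f' f'' : ℝ → ℝ) (a b θ : ℝ)
    (hd : 0 < d) (hν : 0 < ν) (hνd : ν < d / 2)
    (hder2 : ∀ t ∈ Set.Icc a b, HasDerivAt f' (f'' t) t)
    (hMorse : ∀ t ∈ Set.Icc a b, d ≤ |f' t| + |f'' t|)
    (hle : ∀ t ∈ Set.Icc a b, f' t ≤ 0)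
    (ha : f' a ≤ -ν) (hb : f' b ≤ -ν)
    (hθ : θ ∈ Set.Icc a b) (hθν : -ν < f' θ) : False := by
  have hab : a ≤ b := le_trans hθ.1 hθ.2
  have hcont : ContinuousOn f' (Set.Icc a b) :=
    fun t ht => ((hder2 t ht).continuousAt).continuousWithinAt
  obtain ⟨σ, hσmem, hσmax⟩ :=
    isCompact_Icc.exists_isMaxOn (Set.nonempty_Icc.2 hab) hcont
  have h1 : -ν < f' σ := lt_of_lt_of_le hθν (hσmax hθ)
  have hσa : a < σ := by
    rcases lt_or_eq_of_le hσmem.1 with h | h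
    · exact h
    · exfalso; rw [← h] at h1; linarith
  have hσb : σ < b := by
    rcases lt_or_eq_of_le hσmem.2 with h | h
    · exact h
    · exfalso; rw [h] at h1; linarith
  have hloc : IsLocalMax f' σ := hσmax.isLocalMax (Icc_mem_nhds hσa hσb)
  have h2 : f'' σ = 0 := hloc.hasDerivAt_eq_zero (hder2 σ hσmem)
  have h3 := hMorse σ hσmem
  rw [h2] at h3
  have h4 : |f' σ| < ν := by
    rw [abs_of_nonpos (hle σ hσmem)]; linarith
  simp only [abs_zero, add_zero] at h3
  linarith

lemma no_dip_pos (d ν : ℝ) (f' f'' : ℝ → ℝ) (a b θ : ℝ)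
    (hd : 0 < d) (hν : 0 < ν) (hνd : ν < d / 2)
    (hder2 : ∀ t ∈ Set.Icc a b, HasDerivAt f' (f'' t) t)
    (hMorse : ∀ t ∈ Set.Icc a b, d ≤ |f' t| + |f'' t|)
    (hle : ∀ t ∈ Set.Icc a b, 0 ≤ f' t)
    (ha : ν ≤ f' a) (hb : ν ≤ f' b)
    (hθ : θ ∈ Set.Icc a b) (hθν : f' θ < ν) : False := by
  have hab : a ≤ b := le_trans hθ.1 hθ.2
  have hcont : ContinuousOn f' (Set.Icc a b) :=
    fun t ht => ((hder2 t ht).continuousAt).continuousWithinAt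
  obtain ⟨σ, hσmem, hσmin⟩ :=
    isCompact_Icc.exists_isMinOn (Set.nonempty_Icc.2 hab) hcont
  have h1 : f' σ < ν := lt_of_le_of_lt (hσmin hθ) hθν
  have hσa : a < σ := by
    rcases lt_or_eq_of_le hσmem.1 with h | h
    · exact h
    · exfalso; rw [← h] at h1; linarith
  have hσb : σ < b := by
    rcases lt_or_eq_of_le hσmem.2 with h | h
    · exact h
    · exfalso; rw [h] at h1; linarith
  have hloc : IsLocalMin f' σ := hσmin.isLocalMin (Icc_mem_nhds hσa hσb)
  have h2 : f'' σ = 0 := hloc.hasDerivAt_eq_zero (hder2 σ hσmem)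
  have h3 := hMorse σ hσmem
  rw [h2] at h3
  have h4 : |f' σ| < ν := by
    rw [abs_of_nonneg (hle σ hσmem)]; linarith
  simp only [abs_zero, add_zero] at h3
  linarith

lemma band_bounds (d ν : ℝ) (f f' f'' : ℝ → ℝ) (x y : ℝ) (hxy : x ≤ y)
    (hder1 : ∀ t ∈ Set.Icc x y, HasDerivAt f (f' t) t)
    (hder2 : ∀ t ∈ Set.Icc x y, HasDerivAt f' (f'' t) t)
    (hMorse : ∀ t ∈ Set.Icc x y, d ≤ |f' t| + |f'' t|)
    (hband : ∀ t ∈ Set.Icc x y, |f' t| ≤ ν) :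
    (d - ν) * (y - x) ≤ |f' y - f' x| ∧ |f y - f x| ≤ ν * (y - x) := by
  rcases eq_or_lt_of_le hxy with h | h
  · subst h; simp
  have hyx : (0:ℝ) < y - x := by linarith
  have hne : y - x ≠ 0 := ne_of_gt hyx
  constructor
  · have hcont : ContinuousOn f' (Set.Icc x y) :=
      fun t ht => ((hder2 t ht).continuousAt).continuousWithinAt
    obtain ⟨ξ, hξ, hslope⟩ := exists_hasDerivAt_eq_slope f' f'' h hcont
      (fun t ht => hder2 t (Set.mem_Icc_of_Ioo ht))
    have hξ' : ξ ∈ Set.Icc x y := Set.mem_Icc_of_Ioo hξ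
    have h1 := hMorse ξ hξ'
    have h2 := hband ξ hξ'
    have h3 : d - ν ≤ |f'' ξ| := by linarith
    have h4 : f'' ξ * (y - x) = f' y - f' x := by
      rw [hslope]; field_simp
    rw [← h4, abs_mul, abs_of_pos hyx]
    exact mul_le_mul_of_nonneg_right h3 (le_of_lt hyx)
  · have hcont : ContinuousOn f (Set.Icc x y) :=
      fun t ht => ((hder1 t ht).continuousAt).continuousWithinAt
    obtain ⟨ζ, hζ, hslope⟩ := exists_hasDerivAt_eq_slope f f' h hcont
      (fun t ht => hder1 t (Set.mem_Icc_of_Ioo ht))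
    have hζ' : ζ ∈ Set.Icc x y := Set.mem_Icc_of_Ioo hζ
    have h2 := hband ζ hζ'
    have h4 : f' ζ * (y - x) = f y - f x := by
      rw [hslope]; field_simp
    rw [← h4, abs_mul, abs_of_pos hyx]
    exact mul_le_mul_of_nonneg_right h2 (le_of_lt hyx)


lemma far_right_pos (d ν : ℝ) (f f' f'' : ℝ → ℝ) (c q : ℝ) (hcq : c ≤ q)
    (hd : 0 < d) (hν : 0 < ν) (hνd : ν < d / 2)
    (hder1 : ∀ t ∈ Set.Icc c q, HasDerivAt f (f' t) t)
    (hder2 : ∀ t ∈ Set.Icc c q, HasDerivAt f' (f'' t) t)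
    (hMorse : ∀ t ∈ Set.Icc c q, d ≤ |f' t| + |f'' t|)
    (hsign : ∀ t ∈ Set.Icc c q, 0 ≤ f' t)
    (hq : ν ≤ f' q)
    (hgap : d * (f q - f c) ≤ 2 * ν ^ 2) :
    d * (q - c) ≤ 9 / 2 * ν := by
  by_contra hcon
  push_neg at hcon
  obtain ⟨r, hr0, hdr⟩ : ∃ r, 0 < r ∧ d * r = ν :=
    ⟨ν / d, div_pos hν hd, by field_simp⟩
  have hr12 : r < 1 / 2 := by nlinarith
  obtain ⟨m, hmc⟩ : ∃ m, m - c = 5 / 2 * r := ⟨c + 5 / 2 * r, by ring⟩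
  have hcm : c ≤ m := by nlinarith
  have hmq : m < q := by
    by_contra hqm
    push_neg at hqm
    have h1 : q - c ≤ 5 / 2 * r := by linarith
    have h2 := mul_le_mul_of_nonneg_left h1 hd.le
    nlinarith
  have hsub : Set.Icc c m ⊆ Set.Icc c q := Set.Icc_subset_Icc_right hmq.le
  have hex : ∃ s ∈ Set.Icc c m, ν ≤ f' s := by
    by_contra hall
    push_neg at hall
    have hband : ∀ t ∈ Set.Icc c m, |f' t| ≤ ν := fun t ht => by
      rw [abs_of_nonneg (hsign t (hsub ht))]; exact (hall t ht).le
    obtain ⟨h1, -⟩ := band_bounds d ν f f' f'' c m hcm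
      (fun t ht => hder1 t (hsub ht)) (fun t ht => hder2 t (hsub ht))
      (fun t ht => hMorse t (hsub ht)) hband
    have h2 : |f' m - f' c| ≤ ν := by
      have hm0 := hsign m (hsub (Set.right_mem_Icc.2 hcm))
      have hc0 := hsign c (hsub (Set.left_mem_Icc.2 hcm))
      have hmν := (hall m (Set.right_mem_Icc.2 hcm)).le
      have hcν := (hall c (Set.left_mem_Icc.2 hcm)).le
      rw [abs_le]; constructor <;> linarith
    rw [hmc] at h1
    have h3 := h1.trans h2
    nlinarith [mul_pos hν (show (0:ℝ) < 1 / 2 - r by linarith)]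
  obtain ⟨s, hs, hsν⟩ := hex
  have hsq : s < q := lt_of_le_of_lt hs.2 hmq
  have hsubsq : Set.Icc s q ⊆ Set.Icc c q := Set.Icc_subset_Icc_left hs.1
  have hstay : ∀ u ∈ Set.Icc s q, ν ≤ f' u := by
    intro u hu
    by_contra hu'
    push_neg at hu'
    exact no_dip_pos d ν f' f'' s q u hd hν hνd
      (fun t ht => hder2 t (hsubsq ht)) (fun t ht => hMorse t (hsubsq ht))
      (fun t ht => hsign t (hsubsq ht)) hsν hq hu hu'
  obtain ⟨ξ, hξ, hslope⟩ := exists_hasDerivAt_eq_slope f f' hsq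
    (fun t ht => ((hder1 t (hsubsq ht)).continuousAt).continuousWithinAt)
    (fun t ht => hder1 t (hsubsq (Set.mem_Icc_of_Ioo ht)))
  have hξν : ν ≤ f' ξ := hstay ξ (Set.mem_Icc_of_Ioo hξ)
  have h5 : ν * (q - s) ≤ f q - f s := by
    have h6 : f' ξ * (q - s) = f q - f s := by
      rw [hslope, div_mul_cancel₀ _ (ne_of_gt (sub_pos.2 hsq))]
    rw [← h6]
    exact mul_le_mul_of_nonneg_right hξν (by linarith)
  have h7 : f c ≤ f s := by
    rcases eq_or_lt_of_le hs.1 with h | h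
    · rw [h]
    · have hsubcs : Set.Icc c s ⊆ Set.Icc c q := Set.Icc_subset_Icc_right hsq.le
      obtain ⟨ζ, hζ, hsl2⟩ := exists_hasDerivAt_eq_slope f f' h
        (fun t ht => ((hder1 t (hsubcs ht)).continuousAt).continuousWithinAt)
        (fun t ht => hder1 t (hsubcs (Set.mem_Icc_of_Ioo ht)))
      have h8 : f' ζ * (s - c) = f s - f c := by
        rw [hsl2, div_mul_cancel₀ _ (ne_of_gt (sub_pos.2 h))]
      nlinarith [hsign ζ (hsubcs (Set.mem_Icc_of_Ioo hζ))]
  have h9 : ν * (q - s) ≤ f q - f c := by linarith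
  have h10 : d * (ν * (q - s)) ≤ 2 * ν ^ 2 :=
    (mul_le_mul_of_nonneg_left h9 hd.le).trans hgap
  have h11 : d * (q - s) ≤ 2 * ν := by
    have h12 : ν * (d * (q - s)) ≤ ν * (2 * ν) := by linarith [h10]
    exact (mul_le_mul_iff_right₀ hν).1 h12
  have h13 : d * (s - c) ≤ 5 / 2 * ν := by
    have hsm : s - c ≤ 5 / 2 * r := by linarith [hs.2, hmc]
    have := mul_le_mul_of_nonneg_left hsm hd.le
    nlinarith
  linarith

lemma far_left_pos (d ν : ℝ) (f f' f'' : ℝ → ℝ) (c q : ℝ) (hcq : q ≤ c)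
    (hd : 0 < d) (hν : 0 < ν) (hνd : ν < d / 2)
    (hder1 : ∀ t ∈ Set.Icc q c, HasDerivAt f (f' t) t)
    (hder2 : ∀ t ∈ Set.Icc q c, HasDerivAt f' (f'' t) t)
    (hMorse : ∀ t ∈ Set.Icc q c, d ≤ |f' t| + |f'' t|)
    (hsign : ∀ t ∈ Set.Icc q c, 0 ≤ f' t)
    (hq : ν ≤ f' q)
    (hgap : d * (f c - f q) ≤ 2 * ν ^ 2) :
    d * (c - q) ≤ 9 / 2 * ν := by
  by_contra hcon
  push_neg at hcon
  obtain ⟨r, hr0, hdr⟩ : ∃ r, 0 < r ∧ d * r = ν :=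
    ⟨ν / d, div_pos hν hd, by field_simp⟩
  have hr12 : r < 1 / 2 := by nlinarith
  obtain ⟨m, hmc⟩ : ∃ m, c - m = 5 / 2 * r := ⟨c - 5 / 2 * r, by ring⟩
  have hcm : m ≤ c := by nlinarith
  have hmq : q < m := by
    by_contra hqm
    push_neg at hqm
    have h1 : c - q ≤ 5 / 2 * r := by linarith
    have h2 := mul_le_mul_of_nonneg_left h1 hd.le
    nlinarith
  have hsub : Set.Icc m c ⊆ Set.Icc q c := Set.Icc_subset_Icc_left hmq.le
  have hex : ∃ s ∈ Set.Icc m c, ν ≤ f' s := by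
    by_contra hall
    push_neg at hall
    have hband : ∀ t ∈ Set.Icc m c, |f' t| ≤ ν := fun t ht => by
      rw [abs_of_nonneg (hsign t (hsub ht))]; exact (hall t ht).le
    obtain ⟨h1, -⟩ := band_bounds d ν f f' f'' m c hcm
      (fun t ht => hder1 t (hsub ht)) (fun t ht => hder2 t (hsub ht))
      (fun t ht => hMorse t (hsub ht)) hband
    have h2 : |f' c - f' m| ≤ ν := by
      have hm0 := hsign m (hsub (Set.left_mem_Icc.2 hcm))
      have hc0 := hsign c (hsub (Set.right_mem_Icc.2 hcm))
      have hmν := (hall m (Set.left_mem_Icc.2 hcm)).le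
      have hcν := (hall c (Set.right_mem_Icc.2 hcm)).le
      rw [abs_le]; constructor <;> linarith
    rw [hmc] at h1
    have h3 := h1.trans h2
    nlinarith [mul_pos hν (show (0:ℝ) < 1 / 2 - r by linarith)]
  obtain ⟨s, hs, hsν⟩ := hex
  have hsq : q < s := lt_of_lt_of_le hmq hs.1
  have hsubsq : Set.Icc q s ⊆ Set.Icc q c := Set.Icc_subset_Icc_right hs.2
  have hstay : ∀ u ∈ Set.Icc q s, ν ≤ f' u := by
    intro u hu
    by_contra hu'
    push_neg at hu'
    exact no_dip_pos d ν f' f'' q s u hd hν hνd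
      (fun t ht => hder2 t (hsubsq ht)) (fun t ht => hMorse t (hsubsq ht))
      (fun t ht => hsign t (hsubsq ht)) hq hsν hu hu'
  obtain ⟨ξ, hξ, hslope⟩ := exists_hasDerivAt_eq_slope f f' hsq
    (fun t ht => ((hder1 t (hsubsq ht)).continuousAt).continuousWithinAt)
    (fun t ht => hder1 t (hsubsq (Set.mem_Icc_of_Ioo ht)))
  have hξν : ν ≤ f' ξ := hstay ξ (Set.mem_Icc_of_Ioo hξ)
  have h5 : ν * (s - q) ≤ f s - f q := by
    have h6 : f' ξ * (s - q) = f s - f q := by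
      rw [hslope, div_mul_cancel₀ _ (ne_of_gt (sub_pos.2 hsq))]
    rw [← h6]
    exact mul_le_mul_of_nonneg_right hξν (by linarith)
  have h7 : f s ≤ f c := by
    rcases eq_or_lt_of_le hs.2 with h | h
    · rw [h]
    · have hsubcs : Set.Icc s c ⊆ Set.Icc q c := Set.Icc_subset_Icc_left hsq.le
      obtain ⟨ζ, hζ, hsl2⟩ := exists_hasDerivAt_eq_slope f f' h
        (fun t ht => ((hder1 t (hsubcs ht)).continuousAt).continuousWithinAt)
        (fun t ht => hder1 t (hsubcs (Set.mem_Icc_of_Ioo ht)))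
      have h8 : f' ζ * (c - s) = f c - f s := by
        rw [hsl2, div_mul_cancel₀ _ (ne_of_gt (sub_pos.2 h))]
      nlinarith [hsign ζ (hsubcs (Set.mem_Icc_of_Ioo hζ))]
  have h9 : ν * (s - q) ≤ f c - f q := by linarith
  have h10 : d * (ν * (s - q)) ≤ 2 * ν ^ 2 :=
    (mul_le_mul_of_nonneg_left h9 hd.le).trans hgap
  have h11 : d * (s - q) ≤ 2 * ν := by
    have h12 : ν * (d * (s - q)) ≤ ν * (2 * ν) := by linarith [h10]
    exact (mul_le_mul_iff_right₀ hν).1 h12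
  have h13 : d * (c - s) ≤ 5 / 2 * ν := by
    have hsm : c - s ≤ 5 / 2 * r := by linarith [hs.1, hmc]
    have := mul_le_mul_of_nonneg_left hsm hd.le
    nlinarith
  linarith

lemma far_right_neg (d ν : ℝ) (f f' f'' : ℝ → ℝ) (c q : ℝ) (hcq : c ≤ q)
    (hd : 0 < d) (hν : 0 < ν) (hνd : ν < d / 2)
    (hder1 : ∀ t ∈ Set.Icc c q, HasDerivAt f (f' t) t)
    (hder2 : ∀ t ∈ Set.Icc c q, HasDerivAt f' (f'' t) t)
    (hMorse : ∀ t ∈ Set.Icc c q, d ≤ |f' t| + |f'' t|)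
    (hsign : ∀ t ∈ Set.Icc c q, f' t ≤ 0)
    (hq : f' q ≤ -ν)
    (hgap : d * (f c - f q) ≤ 2 * ν ^ 2) :
    d * (q - c) ≤ 9 / 2 * ν := by
  by_contra hcon
  push_neg at hcon
  obtain ⟨r, hr0, hdr⟩ : ∃ r, 0 < r ∧ d * r = ν :=
    ⟨ν / d, div_pos hν hd, by field_simp⟩
  have hr12 : r < 1 / 2 := by nlinarith
  obtain ⟨m, hmc⟩ : ∃ m, m - c = 5 / 2 * r := ⟨c + 5 / 2 * r, by ring⟩
  have hcm : c ≤ m := by nlinarith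
  have hmq : m < q := by
    by_contra hqm
    push_neg at hqm
    have h1 : q - c ≤ 5 / 2 * r := by linarith
    have h2 := mul_le_mul_of_nonneg_left h1 hd.le
    nlinarith
  have hsub : Set.Icc c m ⊆ Set.Icc c q := Set.Icc_subset_Icc_right hmq.le
  have hex : ∃ s ∈ Set.Icc c m, f' s ≤ -ν := by
    by_contra hall
    push_neg at hall
    have hband : ∀ t ∈ Set.Icc c m, |f' t| ≤ ν := fun t ht => by
      rw [abs_of_nonpos (hsign t (hsub ht))]; linarith [hall t ht]
    obtain ⟨h1, -⟩ := band_bounds d ν f f' f'' c m hcm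
      (fun t ht => hder1 t (hsub ht)) (fun t ht => hder2 t (hsub ht))
      (fun t ht => hMorse t (hsub ht)) hband
    have h2 : |f' m - f' c| ≤ ν := by
      have hm0 := hsign m (hsub (Set.right_mem_Icc.2 hcm))
      have hc0 := hsign c (hsub (Set.left_mem_Icc.2 hcm))
      have hmν := hall m (Set.right_mem_Icc.2 hcm)
      have hcν := hall c (Set.left_mem_Icc.2 hcm)
      rw [abs_le]; constructor <;> linarith
    rw [hmc] at h1
    have h3 := h1.trans h2
    nlinarith [mul_pos hν (show (0:ℝ) < 1 / 2 - r by linarith)]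
  obtain ⟨s, hs, hsν⟩ := hex
  have hsq : s < q := lt_of_le_of_lt hs.2 hmq
  have hsubsq : Set.Icc s q ⊆ Set.Icc c q := Set.Icc_subset_Icc_left hs.1
  have hstay : ∀ u ∈ Set.Icc s q, f' u ≤ -ν := by
    intro u hu
    by_contra hu'
    push_neg at hu'
    exact no_dip_neg d ν f' f'' s q u hd hν hνd
      (fun t ht => hder2 t (hsubsq ht)) (fun t ht => hMorse t (hsubsq ht))
      (fun t ht => hsign t (hsubsq ht)) hsν hq hu hu'
  obtain ⟨ξ, hξ, hslope⟩ := exists_hasDerivAt_eq_slope f f' hsq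
    (fun t ht => ((hder1 t (hsubsq ht)).continuousAt).continuousWithinAt)
    (fun t ht => hder1 t (hsubsq (Set.mem_Icc_of_Ioo ht)))
  have hξν : f' ξ ≤ -ν := hstay ξ (Set.mem_Icc_of_Ioo hξ)
  have h5 : ν * (q - s) ≤ f s - f q := by
    have h6 : f' ξ * (q - s) = f q - f s := by
      rw [hslope, div_mul_cancel₀ _ (ne_of_gt (sub_pos.2 hsq))]
    nlinarith [mul_le_mul_of_nonneg_right hξν (show (0:ℝ) ≤ q - s by linarith)]
  have h7 : f s ≤ f c := by
    rcases eq_or_lt_of_le hs.1 with h | h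
    · rw [h]
    · have hsubcs : Set.Icc c s ⊆ Set.Icc c q := Set.Icc_subset_Icc_right hsq.le
      obtain ⟨ζ, hζ, hsl2⟩ := exists_hasDerivAt_eq_slope f f' h
        (fun t ht => ((hder1 t (hsubcs ht)).continuousAt).continuousWithinAt)
        (fun t ht => hder1 t (hsubcs (Set.mem_Icc_of_Ioo ht)))
      have h8 : f' ζ * (s - c) = f s - f c := by
        rw [hsl2, div_mul_cancel₀ _ (ne_of_gt (sub_pos.2 h))]
      nlinarith [hsign ζ (hsubcs (Set.mem_Icc_of_Ioo hζ))]
  have h9 : ν * (q - s) ≤ f c - f q := by linarith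
  have h10 : d * (ν * (q - s)) ≤ 2 * ν ^ 2 :=
    (mul_le_mul_of_nonneg_left h9 hd.le).trans hgap
  have h11 : d * (q - s) ≤ 2 * ν := by
    have h12 : ν * (d * (q - s)) ≤ ν * (2 * ν) := by linarith [h10]
    exact (mul_le_mul_iff_right₀ hν).1 h12
  have h13 : d * (s - c) ≤ 5 / 2 * ν := by
    have hsm : s - c ≤ 5 / 2 * r := by linarith [hs.2, hmc]
    have := mul_le_mul_of_nonneg_left hsm hd.le
    nlinarith
  linarith

lemma far_left_neg (d ν : ℝ) (f f' f'' : ℝ → ℝ) (c q : ℝ) (hcq : q ≤ c)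
    (hd : 0 < d) (hν : 0 < ν) (hνd : ν < d / 2)
    (hder1 : ∀ t ∈ Set.Icc q c, HasDerivAt f (f' t) t)
    (hder2 : ∀ t ∈ Set.Icc q c, HasDerivAt f' (f'' t) t)
    (hMorse : ∀ t ∈ Set.Icc q c, d ≤ |f' t| + |f'' t|)
    (hsign : ∀ t ∈ Set.Icc q c, f' t ≤ 0)
    (hq : f' q ≤ -ν)
    (hgap : d * (f q - f c) ≤ 2 * ν ^ 2) :
    d * (c - q) ≤ 9 / 2 * ν := by
  by_contra hcon
  push_neg at hcon
  obtain ⟨r, hr0, hdr⟩ : ∃ r, 0 < r ∧ d * r = ν :=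
    ⟨ν / d, div_pos hν hd, by field_simp⟩
  have hr12 : r < 1 / 2 := by nlinarith
  obtain ⟨m, hmc⟩ : ∃ m, c - m = 5 / 2 * r := ⟨c - 5 / 2 * r, by ring⟩
  have hcm : m ≤ c := by nlinarith
  have hmq : q < m := by
    by_contra hqm
    push_neg at hqm
    have h1 : c - q ≤ 5 / 2 * r := by linarith
    have h2 := mul_le_mul_of_nonneg_left h1 hd.le
    nlinarith
  have hsub : Set.Icc m c ⊆ Set.Icc q c := Set.Icc_subset_Icc_left hmq.le
  have hex : ∃ s ∈ Set.Icc m c, f' s ≤ -ν := by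
    by_contra hall
    push_neg at hall
    have hband : ∀ t ∈ Set.Icc m c, |f' t| ≤ ν := fun t ht => by
      rw [abs_of_nonpos (hsign t (hsub ht))]; linarith [hall t ht]
    obtain ⟨h1, -⟩ := band_bounds d ν f f' f'' m c hcm
      (fun t ht => hder1 t (hsub ht)) (fun t ht => hder2 t (hsub ht))
      (fun t ht => hMorse t (hsub ht)) hband
    have h2 : |f' c - f' m| ≤ ν := by
      have hm0 := hsign m (hsub (Set.left_mem_Icc.2 hcm))
      have hc0 := hsign c (hsub (Set.right_mem_Icc.2 hcm))
      have hmν := hall m (Set.left_mem_Icc.2 hcm)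
      have hcν := hall c (Set.right_mem_Icc.2 hcm)
      rw [abs_le]; constructor <;> linarith
    rw [hmc] at h1
    have h3 := h1.trans h2
    nlinarith [mul_pos hν (show (0:ℝ) < 1 / 2 - r by linarith)]
  obtain ⟨s, hs, hsν⟩ := hex
  have hsq : q < s := lt_of_lt_of_le hmq hs.1
  have hsubsq : Set.Icc q s ⊆ Set.Icc q c := Set.Icc_subset_Icc_right hs.2
  have hstay : ∀ u ∈ Set.Icc q s, f' u ≤ -ν := by
    intro u hu
    by_contra hu'
    push_neg at hu'
    exact no_dip_neg d ν f' f'' q s u hd hν hνd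
      (fun t ht => hder2 t (hsubsq ht)) (fun t ht => hMorse t (hsubsq ht))
      (fun t ht => hsign t (hsubsq ht)) hq hsν hu hu'
  obtain ⟨ξ, hξ, hslope⟩ := exists_hasDerivAt_eq_slope f f' hsq
    (fun t ht => ((hder1 t (hsubsq ht)).continuousAt).continuousWithinAt)
    (fun t ht => hder1 t (hsubsq (Set.mem_Icc_of_Ioo ht)))
  have hξν : f' ξ ≤ -ν := hstay ξ (Set.mem_Icc_of_Ioo hξ)
  have h5 : ν * (s - q) ≤ f q - f s := by
    have h6 : f' ξ * (s - q) = f s - f q := by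
      rw [hslope, div_mul_cancel₀ _ (ne_of_gt (sub_pos.2 hsq))]
    nlinarith [mul_le_mul_of_nonneg_right hξν (show (0:ℝ) ≤ s - q by linarith)]
  have h7 : f c ≤ f s := by
    rcases eq_or_lt_of_le hs.2 with h | h
    · rw [h]
    · have hsubcs : Set.Icc s c ⊆ Set.Icc q c := Set.Icc_subset_Icc_left hsq.le
      obtain ⟨ζ, hζ, hsl2⟩ := exists_hasDerivAt_eq_slope f f' h
        (fun t ht => ((hder1 t (hsubcs ht)).continuousAt).continuousWithinAt)
        (fun t ht => hder1 t (hsubcs (Set.mem_Icc_of_Ioo ht)))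
      have h8 : f' ζ * (c - s) = f c - f s := by
        rw [hsl2, div_mul_cancel₀ _ (ne_of_gt (sub_pos.2 h))]
      nlinarith [hsign ζ (hsubcs (Set.mem_Icc_of_Ioo hζ))]
  have h9 : ν * (s - q) ≤ f q - f c := by linarith
  have h10 : d * (ν * (s - q)) ≤ 2 * ν ^ 2 :=
    (mul_le_mul_of_nonneg_left h9 hd.le).trans hgap
  have h11 : d * (s - q) ≤ 2 * ν := by
    have h12 : ν * (d * (s - q)) ≤ ν * (2 * ν) := by linarith [h10]
    exact (mul_le_mul_iff_right₀ hν).1 h12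
  have h13 : d * (c - s) ≤ 5 / 2 * ν := by
    have hsm : c - s ≤ 5 / 2 * r := by linarith [hs.1, hmc]
    have := mul_le_mul_of_nonneg_left hsm hd.le
    nlinarith
  linarith

lemma classify_am (am bm ap bp d ν : ℝ) (f' f'' : ℝ → ℝ)
    (hlem : am ≤ bm)
    (hdisj : Set.Ioo am bm ∩ Set.Ioo ap bp = ∅)
    (hd : 0 < d)
    (hder2 : ∀ θ ∈ Set.Icc am bm ∪ Set.Icc ap bp, HasDerivAt f' (f'' θ) θ)
    (hneg : ∀ θ ∈ Set.Icc am bm, f' θ ≤ 0)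
    (hpos : ∀ θ ∈ Set.Icc ap bp, 0 ≤ f' θ)
    (hMorse : ∀ θ ∈ Set.Icc am bm ∪ Set.Icc ap bp, d ≤ |f' θ| + |f'' θ|)
    (hbdry : ∀ θ ∈ frontier (Set.Icc am bm ∪ Set.Icc ap bp), ν ≤ |f' θ|) :
    f' am ≤ -ν ∨ (am = bp ∧ ap < am ∧ f' am = 0) := by
  have hamI : am ∈ Set.Icc am bm ∪ Set.Icc ap bp := Or.inl ⟨le_refl am, hlem⟩
  by_cases hfr : am ∈ frontier (Set.Icc am bm ∪ Set.Icc ap bp)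
  · left
    have h := hbdry am hfr
    rw [abs_of_nonpos (hneg am ⟨le_refl am, hlem⟩)] at h
    linarith
  · right
    have hclosed : IsClosed (Set.Icc am bm ∪ Set.Icc ap bp) :=
      isClosed_Icc.union isClosed_Icc
    have hint : am ∈ interior (Set.Icc am bm ∪ Set.Icc ap bp) := by
      by_contra h
      exact hfr (by rw [hclosed.frontier_eq]; exact ⟨hamI, h⟩)
    obtain ⟨ε, hε, hball⟩ := Metric.mem_nhds_iff.1 (mem_interior_iff_mem_nhds.1 hint)
    rw [Real.ball_eq_Ioo] at hball
    have hkey : ∀ δ : ℝ, 0 < δ → δ < ε → ap ≤ am - δ ∧ am - δ ≤ bp := by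
      intro δ h1 h2
      have hmem : am - δ ∈ Set.Icc am bm ∪ Set.Icc ap bp :=
        hball ⟨by linarith, by linarith⟩
      rcases hmem with h | h
      · exfalso; have := h.1; linarith
      · exact h
    have hap : ap < am := by
      obtain ⟨h1, -⟩ := hkey (ε / 2) (by linarith) (by linarith)
      linarith
    have hbp : am ≤ bp := by
      by_contra h
      push_neg at h
      obtain ⟨-, h2⟩ := hkey (min (ε / 2) ((am - bp) / 2))
        (lt_min (by linarith) (by linarith))
        (lt_of_le_of_lt (min_le_left _ _) (by linarith))
      have h3 := min_le_right (ε / 2) ((am - bp) / 2)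
      linarith
    have hf0 : f' am = 0 :=
      le_antisymm (hneg am ⟨le_refl am, hlem⟩) (hpos am ⟨hap.le, hbp⟩)
    refine ⟨?_, hap, hf0⟩
    by_contra hne
    have hlt : am < bp := lt_of_le_of_ne hbp hne
    rcases eq_or_lt_of_le hlem with heqm | hltm
    · have hloc : IsLocalMin f' am :=
        Filter.eventually_of_mem (Icc_mem_nhds hap hlt)
          (fun y hy => by rw [hf0]; exact hpos y hy)
      have h2 : f'' am = 0 := hloc.hasDerivAt_eq_zero (hder2 am hamI)
      have h3 := hMorse am hamI
      rw [hf0, h2] at h3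
      simp only [abs_zero, add_zero] at h3
      linarith
    · have hw0 : 0 < min (bm - am) (bp - am) := lt_min (by linarith) (by linarith)
      have hw1 := min_le_left (bm - am) (bp - am)
      have hw2 := min_le_right (bm - am) (bp - am)
      have hu : am + min (bm - am) (bp - am) / 2 ∈ Set.Ioo am bm ∩ Set.Ioo ap bp :=
        ⟨⟨by linarith, by linarith⟩, ⟨by linarith, by linarith⟩⟩
      rw [Set.eq_empty_iff_forall_notMem] at hdisj
      exact hdisj _ hu

lemma classify_bm (am bm ap bp d ν : ℝ) (f' f'' : ℝ → ℝ)
    (hlem : am ≤ bm)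
    (hdisj : Set.Ioo am bm ∩ Set.Ioo ap bp = ∅)
    (hd : 0 < d)
    (hder2 : ∀ θ ∈ Set.Icc am bm ∪ Set.Icc ap bp, HasDerivAt f' (f'' θ) θ)
    (hneg : ∀ θ ∈ Set.Icc am bm, f' θ ≤ 0)
    (hpos : ∀ θ ∈ Set.Icc ap bp, 0 ≤ f' θ)
    (hMorse : ∀ θ ∈ Set.Icc am bm ∪ Set.Icc ap bp, d ≤ |f' θ| + |f'' θ|)
    (hbdry : ∀ θ ∈ frontier (Set.Icc am bm ∪ Set.Icc ap bp), ν ≤ |f' θ|) :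
    f' bm ≤ -ν ∨ (bm = ap ∧ bm < bp ∧ f' bm = 0) := by
  have hbmI : bm ∈ Set.Icc am bm ∪ Set.Icc ap bp := Or.inl ⟨hlem, le_refl bm⟩
  by_cases hfr : bm ∈ frontier (Set.Icc am bm ∪ Set.Icc ap bp)
  · left
    have h := hbdry bm hfr
    rw [abs_of_nonpos (hneg bm ⟨hlem, le_refl bm⟩)] at h
    linarith
  · right
    have hclosed : IsClosed (Set.Icc am bm ∪ Set.Icc ap bp) :=
      isClosed_Icc.union isClosed_Icc
    have hint : bm ∈ interior (Set.Icc am bm ∪ Set.Icc ap bp) := by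
      by_contra h
      exact hfr (by rw [hclosed.frontier_eq]; exact ⟨hbmI, h⟩)
    obtain ⟨ε, hε, hball⟩ := Metric.mem_nhds_iff.1 (mem_interior_iff_mem_nhds.1 hint)
    rw [Real.ball_eq_Ioo] at hball
    have hkey : ∀ δ : ℝ, 0 < δ → δ < ε → ap ≤ bm + δ ∧ bm + δ ≤ bp := by
      intro δ h1 h2
      have hmem : bm + δ ∈ Set.Icc am bm ∪ Set.Icc ap bp :=
        hball ⟨by linarith, by linarith⟩
      rcases hmem with h | h
      · exfalso; have := h.2; linarith
      · exact h
    have hbp : bm < bp := by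
      obtain ⟨-, h1⟩ := hkey (ε / 2) (by linarith) (by linarith)
      linarith
    have hap : ap ≤ bm := by
      by_contra h
      push_neg at h
      obtain ⟨h2, -⟩ := hkey (min (ε / 2) ((ap - bm) / 2))
        (lt_min (by linarith) (by linarith))
        (lt_of_le_of_lt (min_le_left _ _) (by linarith))
      have h3 := min_le_right (ε / 2) ((ap - bm) / 2)
      linarith
    have hf0 : f' bm = 0 :=
      le_antisymm (hneg bm ⟨hlem, le_refl bm⟩) (hpos bm ⟨hap, hbp.le⟩)
    refine ⟨?_, hbp, hf0⟩
    by_contra hne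
    have hlt : ap < bm := lt_of_le_of_ne hap (Ne.symm hne)
    rcases eq_or_lt_of_le hlem with heqm | hltm
    · have hloc : IsLocalMin f' bm :=
        Filter.eventually_of_mem (Icc_mem_nhds hlt hbp)
          (fun y hy => by rw [hf0]; exact hpos y hy)
      have h2 : f'' bm = 0 := hloc.hasDerivAt_eq_zero (hder2 bm hbmI)
      have h3 := hMorse bm hbmI
      rw [hf0, h2] at h3
      simp only [abs_zero, add_zero] at h3
      linarith
    · have hw0 : 0 < min (bm - am) (bm - ap) := lt_min (by linarith) (by linarith)
      have hw1 := min_le_left (bm - am) (bm - ap)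
      have hw2 := min_le_right (bm - am) (bm - ap)
      have hu : bm - min (bm - am) (bm - ap) / 2 ∈ Set.Ioo am bm ∩ Set.Ioo ap bp :=
        ⟨⟨by linarith, by linarith⟩, ⟨by linarith, by linarith⟩⟩
      rw [Set.eq_empty_iff_forall_notMem] at hdisj
      exact hdisj _ hu

lemma classify_ap (am bm ap bp d ν : ℝ) (f' f'' : ℝ → ℝ)
    (hlep : ap ≤ bp)
    (hdisj : Set.Ioo am bm ∩ Set.Ioo ap bp = ∅)
    (hd : 0 < d)
    (hder2 : ∀ θ ∈ Set.Icc am bm ∪ Set.Icc ap bp, HasDerivAt f' (f'' θ) θ)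
    (hneg : ∀ θ ∈ Set.Icc am bm, f' θ ≤ 0)
    (hpos : ∀ θ ∈ Set.Icc ap bp, 0 ≤ f' θ)
    (hMorse : ∀ θ ∈ Set.Icc am bm ∪ Set.Icc ap bp, d ≤ |f' θ| + |f'' θ|)
    (hbdry : ∀ θ ∈ frontier (Set.Icc am bm ∪ Set.Icc ap bp), ν ≤ |f' θ|) :
    ν ≤ f' ap ∨ (ap = bm ∧ am < ap ∧ f' ap = 0) := by
  have hapI : ap ∈ Set.Icc am bm ∪ Set.Icc ap bp := Or.inr ⟨le_refl ap, hlep⟩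
  by_cases hfr : ap ∈ frontier (Set.Icc am bm ∪ Set.Icc ap bp)
  · left
    have h := hbdry ap hfr
    rw [abs_of_nonneg (hpos ap ⟨le_refl ap, hlep⟩)] at h
    linarith
  · right
    have hclosed : IsClosed (Set.Icc am bm ∪ Set.Icc ap bp) :=
      isClosed_Icc.union isClosed_Icc
    have hint : ap ∈ interior (Set.Icc am bm ∪ Set.Icc ap bp) := by
      by_contra h
      exact hfr (by rw [hclosed.frontier_eq]; exact ⟨hapI, h⟩)
    obtain ⟨ε, hε, hball⟩ := Metric.mem_nhds_iff.1 (mem_interior_iff_mem_nhds.1 hint)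
    rw [Real.ball_eq_Ioo] at hball
    have hkey : ∀ δ : ℝ, 0 < δ → δ < ε → am ≤ ap - δ ∧ ap - δ ≤ bm := by
      intro δ h1 h2
      have hmem : ap - δ ∈ Set.Icc am bm ∪ Set.Icc ap bp :=
        hball ⟨by linarith, by linarith⟩
      rcases hmem with h | h
      · exact h
      · exfalso; have := h.1; linarith
    have ham : am < ap := by
      obtain ⟨h1, -⟩ := hkey (ε / 2) (by linarith) (by linarith)
      linarith
    have hbm : ap ≤ bm := by
      by_contra h
      push_neg at h
      obtain ⟨-, h2⟩ := hkey (min (ε / 2) ((ap - bm) / 2))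
        (lt_min (by linarith) (by linarith))
        (lt_of_le_of_lt (min_le_left _ _) (by linarith))
      have h3 := min_le_right (ε / 2) ((ap - bm) / 2)
      linarith
    have hf0 : f' ap = 0 :=
      le_antisymm (hneg ap ⟨ham.le, hbm⟩) (hpos ap ⟨le_refl ap, hlep⟩)
    refine ⟨?_, ham, hf0⟩
    by_contra hne
    have hlt : ap < bm := lt_of_le_of_ne hbm hne
    rcases eq_or_lt_of_le hlep with heqp | hltp
    · have hloc : IsLocalMax f' ap :=
        Filter.eventually_of_mem (Icc_mem_nhds ham hlt)
          (fun y hy => by rw [hf0]; exact hneg y hy)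
      have h2 : f'' ap = 0 := hloc.hasDerivAt_eq_zero (hder2 ap hapI)
      have h3 := hMorse ap hapI
      rw [hf0, h2] at h3
      simp only [abs_zero, add_zero] at h3
      linarith
    · have hw0 : 0 < min (bm - ap) (bp - ap) := lt_min (by linarith) (by linarith)
      have hw1 := min_le_left (bm - ap) (bp - ap)
      have hw2 := min_le_right (bm - ap) (bp - ap)
      have hu : ap + min (bm - ap) (bp - ap) / 2 ∈ Set.Ioo am bm ∩ Set.Ioo ap bp :=
        ⟨⟨by linarith, by linarith⟩, ⟨by linarith, by linarith⟩⟩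
      rw [Set.eq_empty_iff_forall_notMem] at hdisj
      exact hdisj _ hu

lemma classify_bp (am bm ap bp d ν : ℝ) (f' f'' : ℝ → ℝ)
    (hlep : ap ≤ bp)
    (hdisj : Set.Ioo am bm ∩ Set.Ioo ap bp = ∅)
    (hd : 0 < d)
    (hder2 : ∀ θ ∈ Set.Icc am bm ∪ Set.Icc ap bp, HasDerivAt f' (f'' θ) θ)
    (hneg : ∀ θ ∈ Set.Icc am bm, f' θ ≤ 0)
    (hpos : ∀ θ ∈ Set.Icc ap bp, 0 ≤ f' θ)
    (hMorse : ∀ θ ∈ Set.Icc am bm ∪ Set.Icc ap bp, d ≤ |f' θ| + |f'' θ|)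
    (hbdry : ∀ θ ∈ frontier (Set.Icc am bm ∪ Set.Icc ap bp), ν ≤ |f' θ|) :
    ν ≤ f' bp ∨ (bp = am ∧ bp < bm ∧ f' bp = 0) := by
  have hbpI : bp ∈ Set.Icc am bm ∪ Set.Icc ap bp := Or.inr ⟨hlep, le_refl bp⟩
  by_cases hfr : bp ∈ frontier (Set.Icc am bm ∪ Set.Icc ap bp)
  · left
    have h := hbdry bp hfr
    rw [abs_of_nonneg (hpos bp ⟨hlep, le_refl bp⟩)] at h
    linarith
  · right
    have hclosed : IsClosed (Set.Icc am bm ∪ Set.Icc ap bp) :=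
      isClosed_Icc.union isClosed_Icc
    have hint : bp ∈ interior (Set.Icc am bm ∪ Set.Icc ap bp) := by
      by_contra h
      exact hfr (by rw [hclosed.frontier_eq]; exact ⟨hbpI, h⟩)
    obtain ⟨ε, hε, hball⟩ := Metric.mem_nhds_iff.1 (mem_interior_iff_mem_nhds.1 hint)
    rw [Real.ball_eq_Ioo] at hball
    have hkey : ∀ δ : ℝ, 0 < δ → δ < ε → am ≤ bp + δ ∧ bp + δ ≤ bm := by
      intro δ h1 h2
      have hmem : bp + δ ∈ Set.Icc am bm ∪ Set.Icc ap bp :=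
        hball ⟨by linarith, by linarith⟩
      rcases hmem with h | h
      · exact h
      · exfalso; have := h.2; linarith
    have hbm : bp < bm := by
      obtain ⟨-, h1⟩ := hkey (ε / 2) (by linarith) (by linarith)
      linarith
    have ham : am ≤ bp := by
      by_contra h
      push_neg at h
      obtain ⟨h2, -⟩ := hkey (min (ε / 2) ((am - bp) / 2))
        (lt_min (by linarith) (by linarith))
        (lt_of_le_of_lt (min_le_left _ _) (by linarith))
      have h3 := min_le_right (ε / 2) ((am - bp) / 2)
      linarith
    have hf0 : f' bp = 0 :=
      le_antisymm (hneg bp ⟨ham, hbm.le⟩) (hpos bp ⟨hlep, le_refl bp⟩)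
    refine ⟨?_, hbm, hf0⟩
    by_contra hne
    have hlt : am < bp := lt_of_le_of_ne ham (Ne.symm hne)
    rcases eq_or_lt_of_le hlep with heqp | hltp
    · have hloc : IsLocalMax f' bp :=
        Filter.eventually_of_mem (Icc_mem_nhds hlt hbm)
          (fun y hy => by rw [hf0]; exact hneg y hy)
      have h2 : f'' bp = 0 := hloc.hasDerivAt_eq_zero (hder2 bp hbpI)
      have h3 := hMorse bp hbpI
      rw [hf0, h2] at h3
      simp only [abs_zero, add_zero] at h3
      linarith
    · have hw0 : 0 < min (bp - am) (bp - ap) := lt_min (by linarith) (by linarith)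
      have hw1 := min_le_left (bp - am) (bp - ap)
      have hw2 := min_le_right (bp - am) (bp - ap)
      have hu : bp - min (bp - am) (bp - ap) / 2 ∈ Set.Ioo am bm ∩ Set.Ioo ap bp :=
        ⟨⟨by linarith, by linarith⟩, ⟨by linarith, by linarith⟩⟩
      rw [Set.eq_empty_iff_forall_notMem] at hdisj
      exact hdisj _ hu


set_option maxHeartbeats 2000000 in
/-- Under Assumption (C): if the inverse-branch difference `T_f(E*) = f₊⁻¹(E*) − f₋⁻¹(E*)`
satisfies `‖T_f(E*)‖_𝕋 ≥ 7ν/d`, then `|f′| ≥ ν` at both preimages of `E*`. -/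

theorem derivative_lower_bound_from_torus_norm
    (am bm ap bp d D ν : ℝ) (f f' f'' : ℝ → ℝ)
    (hlem : am ≤ bm) (hlep : ap ≤ bp)
    (hdisj : Set.Ioo am bm ∩ Set.Ioo ap bp = ∅)
    (hd : 0 < d) (hdD : d ≤ D)
    (hder1 : ∀ θ ∈ Set.Icc am bm ∪ Set.Icc ap bp, HasDerivAt f (f' θ) θ)
    (hder2 : ∀ θ ∈ Set.Icc am bm ∪ Set.Icc ap bp, HasDerivAt f' (f'' θ) θ)
    (hcont2 : ContinuousOn f'' (Set.Icc am bm ∪ Set.Icc ap bp))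
    (hneg : ∀ θ ∈ Set.Icc am bm, f' θ ≤ 0)
    (hpos : ∀ θ ∈ Set.Icc ap bp, 0 ≤ f' θ)
    (hMorse : ∀ θ ∈ Set.Icc am bm ∪ Set.Icc ap bp,
      d ≤ |f' θ| + |f'' θ| ∧ |f' θ| + |f'' θ| ≤ D)
    (himg : f '' Set.Icc am bm = f '' Set.Icc ap bp)
    (hν : 0 < ν) (hνd : ν < d / 2)
    (hbdry : ∀ θ ∈ frontier (Set.Icc am bm ∪ Set.Icc ap bp), ν ≤ |f' θ|)
    (Estar θm θp : ℝ)
    (hEstar : Estar ∈ f '' Set.Icc am bm)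
    (hθm : θm ∈ Set.Icc am bm) (hfm : f θm = Estar)
    (hθp : θp ∈ Set.Icc ap bp) (hfp : f θp = Estar)
    (hT : 7 * ν / d ≤ torusNorm (θp - θm)) :
    ν ≤ |f' θm| ∧ ν ≤ |f' θp| := by
  have hMo : ∀ θ ∈ Set.Icc am bm ∪ Set.Icc ap bp, d ≤ |f' θ| + |f'' θ| :=
    fun θ h => (hMorse θ h).1
  have hθm' : f' θm ≤ 0 := hneg θm hθm
  have hθp' : 0 ≤ f' θp := hpos θp hθp
  have hfmp : f θp = f θm := by rw [hfp, hfm]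
  have hd7 : d * (7 * ν / d) = 7 * ν := by field_simp
  constructor
  · -- ν ≤ |f' θm|
    by_contra h1
    push_neg at h1
    have hsm : -ν < f' θm := by
      rw [abs_of_nonpos hθm'] at h1; linarith
    have h1' : |f' θm| ≤ ν := h1.le
    by_cases hbm : f' bm ≤ -ν
    · by_cases ham : f' am ≤ -ν
      · exact no_dip_neg d ν f' f'' am bm θm hd hν hνd
          (fun t ht => hder2 t (Or.inl ht)) (fun t ht => hMo t (Or.inl ht))
          hneg ham hbm hθm hsm
      · -- junction max at c = am = bp
        obtain ⟨hceq, hapc, hc0⟩ :=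
          (classify_am am bm ap bp d ν f' f'' hlem hdisj hd hder2 hneg hpos hMo hbdry).resolve_left ham
        have hθpc : θp ≤ am := le_of_le_of_eq hθp.2 hceq.symm
        have hmemp : ∀ t ∈ Set.Icc θp am, t ∈ Set.Icc ap bp :=
          fun t ht => ⟨hθp.1.trans ht.1, le_of_le_of_eq ht.2 hceq⟩
        have hmemm : ∀ t ∈ Set.Icc am θm, t ∈ Set.Icc am bm :=
          fun t ht => ⟨ht.1, ht.2.trans hθm.2⟩
        -- band on [am, θm]
        have hband : ∀ t ∈ Set.Icc am θm, |f' t| ≤ ν := by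
          intro t ht
          rw [abs_of_nonpos (hneg t (hmemm t ht))]
          by_contra hc
          push_neg at hc
          exact no_dip_neg d ν f' f'' t bm θm hd hν hνd
            (fun u hu => hder2 u (Or.inl ⟨ht.1.trans hu.1, hu.2⟩))
            (fun u hu => hMo u (Or.inl ⟨ht.1.trans hu.1, hu.2⟩))
            (fun u hu => hneg u ⟨ht.1.trans hu.1, hu.2⟩)
            (by linarith) hbm ⟨ht.2, hθm.2⟩ hsm
        obtain ⟨hb1, hb2⟩ := band_bounds d ν f f' f'' am θm hθm.1
          (fun t ht => hder1 t (Or.inl (hmemm t ht)))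
          (fun t ht => hder2 t (Or.inl (hmemm t ht)))
          (fun t ht => hMo t (Or.inl (hmemm t ht))) hband
        rw [hc0, sub_zero] at hb1
        have hb1' : (d - ν) * (θm - am) ≤ ν := hb1.trans h1'
        have hlen : d * (θm - am) ≤ 2 * ν := by
          nlinarith [mul_nonneg (show (0:ℝ) ≤ d - 2 * ν by linarith)
            (show (0:ℝ) ≤ θm - am by linarith [hθm.1])]
        have hgap : d * (f am - f θp) ≤ 2 * ν ^ 2 := by
          have h2 : f am - f θm ≤ ν * (θm - am) := by
            have := abs_le.1 hb2; linarith [this.1]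
          rw [hfmp]
          nlinarith [mul_le_mul_of_nonneg_left h2 hd.le,
            mul_le_mul_of_nonneg_left hlen hν.le]
        have hfarp : d * (am - θp) ≤ 9 / 2 * ν := by
          by_cases hθpν : ν ≤ f' θp
          · exact far_left_pos d ν f f' f'' am θp hθpc hd hν hνd
              (fun t ht => hder1 t (Or.inr (hmemp t ht)))
              (fun t ht => hder2 t (Or.inr (hmemp t ht)))
              (fun t ht => hMo t (Or.inr (hmemp t ht)))
              (fun t ht => hpos t (hmemp t ht)) hθpν hgap
          · push_neg at hθpν
            have hap : ν ≤ f' ap := by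
              rcases classify_ap am bm ap bp d ν f' f'' hlep hdisj hd hder2 hneg hpos hMo hbdry with h | ⟨h2, h3, h4⟩
              · exact h
              · exfalso; linarith [hlep]
            have hband2 : ∀ t ∈ Set.Icc θp am, |f' t| ≤ ν := by
              intro t ht
              rw [abs_of_nonneg (hpos t (hmemp t ht))]
              by_contra hc
              push_neg at hc
              exact no_dip_pos d ν f' f'' ap t θp hd hν hνd
                (fun u hu => hder2 u (Or.inr ⟨hu.1, hu.2.trans (hmemp t ht).2⟩))
                (fun u hu => hMo u (Or.inr ⟨hu.1, hu.2.trans (hmemp t ht).2⟩))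
                (fun u hu => hpos u ⟨hu.1, hu.2.trans (hmemp t ht).2⟩)
                hap hc.le ⟨hθp.1, ht.1⟩ hθpν
            obtain ⟨hb3, -⟩ := band_bounds d ν f f' f'' θp am hθpc
              (fun t ht => hder1 t (Or.inr (hmemp t ht)))
              (fun t ht => hder2 t (Or.inr (hmemp t ht)))
              (fun t ht => hMo t (Or.inr (hmemp t ht))) hband2
            rw [hc0, zero_sub, abs_neg, abs_of_nonneg hθp'] at hb3
            have hb3' : (d - ν) * (am - θp) ≤ ν := hb3.trans hθpν.le
            nlinarith [mul_nonneg (show (0:ℝ) ≤ d - 2 * ν by linarith)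
              (show (0:ℝ) ≤ am - θp by linarith)]
        -- conclude
        have habs : |θp - θm| = θm - θp := by
          rw [abs_of_nonpos (by linarith [hθm.1] : θp - θm ≤ 0)]; ring
        have h2 : 7 * ν / d ≤ θm - θp := by
          rw [← habs]; exact hT.trans (torusNorm_le_abs _)
        have h3 := mul_le_mul_of_nonneg_left h2 hd.le
        rw [hd7] at h3
        nlinarith [hlen, hfarp]
    · -- junction min at c = bm = ap
      obtain ⟨hceq, hbmbp, hc0⟩ :=
        (classify_bm am bm ap bp d ν f' f'' hlem hdisj hd hder2 hneg hpos hMo hbdry).resolve_left hbm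
      have ham : f' am ≤ -ν := by
        rcases classify_am am bm ap bp d ν f' f'' hlem hdisj hd hder2 hneg hpos hMo hbdry with h | ⟨h2, h3, h4⟩
        · exact h
        · exfalso; linarith [hlem]
      have hθpc : bm ≤ θp := le_of_eq_of_le hceq hθp.1
      have hmemp : ∀ t ∈ Set.Icc bm θp, t ∈ Set.Icc ap bp :=
        fun t ht => ⟨le_of_eq_of_le hceq.symm ht.1, ht.2.trans hθp.2⟩
      have hmemm : ∀ t ∈ Set.Icc θm bm, t ∈ Set.Icc am bm :=
        fun t ht => ⟨hθm.1.trans ht.1, ht.2⟩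
      -- band on [θm, bm]
      have hband : ∀ t ∈ Set.Icc θm bm, |f' t| ≤ ν := by
        intro t ht
        rw [abs_of_nonpos (hneg t (hmemm t ht))]
        by_contra hc
        push_neg at hc
        exact no_dip_neg d ν f' f'' am t θm hd hν hνd
          (fun u hu => hder2 u (Or.inl ⟨hu.1, hu.2.trans ht.2⟩))
          (fun u hu => hMo u (Or.inl ⟨hu.1, hu.2.trans ht.2⟩))
          (fun u hu => hneg u ⟨hu.1, hu.2.trans ht.2⟩)
          ham (by linarith) ⟨hθm.1, ht.1⟩ hsm
      obtain ⟨hb1, hb2⟩ := band_bounds d ν f f' f'' θm bm hθm.2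
        (fun t ht => hder1 t (Or.inl (hmemm t ht)))
        (fun t ht => hder2 t (Or.inl (hmemm t ht)))
        (fun t ht => hMo t (Or.inl (hmemm t ht))) hband
      rw [hc0, zero_sub, abs_neg] at hb1
      have hb1' : (d - ν) * (bm - θm) ≤ ν := hb1.trans h1'
      have hlen : d * (bm - θm) ≤ 2 * ν := by
        nlinarith [mul_nonneg (show (0:ℝ) ≤ d - 2 * ν by linarith)
          (show (0:ℝ) ≤ bm - θm by linarith [hθm.2])]
      have hgap : d * (f θp - f bm) ≤ 2 * ν ^ 2 := by
        have h2 : f θm - f bm ≤ ν * (bm - θm) := by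
          have := abs_le.1 hb2; linarith [this.1]
        rw [hfmp]
        nlinarith [mul_le_mul_of_nonneg_left h2 hd.le,
          mul_le_mul_of_nonneg_left hlen hν.le]
      have hfarp : d * (θp - bm) ≤ 9 / 2 * ν := by
        by_cases hθpν : ν ≤ f' θp
        · exact far_right_pos d ν f f' f'' bm θp hθpc hd hν hνd
            (fun t ht => hder1 t (Or.inr (hmemp t ht)))
            (fun t ht => hder2 t (Or.inr (hmemp t ht)))
            (fun t ht => hMo t (Or.inr (hmemp t ht)))
            (fun t ht => hpos t (hmemp t ht)) hθpν hgap
        · push_neg at hθpν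
          have hbp : ν ≤ f' bp := by
            rcases classify_bp am bm ap bp d ν f' f'' hlep hdisj hd hder2 hneg hpos hMo hbdry with h | ⟨h2, h3, h4⟩
            · exact h
            · exfalso; linarith [hlep]
          have hband2 : ∀ t ∈ Set.Icc bm θp, |f' t| ≤ ν := by
            intro t ht
            rw [abs_of_nonneg (hpos t (hmemp t ht))]
            by_contra hc
            push_neg at hc
            exact no_dip_pos d ν f' f'' t bp θp hd hν hνd
              (fun u hu => hder2 u (Or.inr ⟨(hmemp t ht).1.trans hu.1, hu.2⟩))
              (fun u hu => hMo u (Or.inr ⟨(hmemp t ht).1.trans hu.1, hu.2⟩))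
              (fun u hu => hpos u ⟨(hmemp t ht).1.trans hu.1, hu.2⟩)
              hc.le hbp ⟨ht.2, hθp.2⟩ hθpν
          obtain ⟨hb3, -⟩ := band_bounds d ν f f' f'' bm θp hθpc
            (fun t ht => hder1 t (Or.inr (hmemp t ht)))
            (fun t ht => hder2 t (Or.inr (hmemp t ht)))
            (fun t ht => hMo t (Or.inr (hmemp t ht))) hband2
          rw [hc0, sub_zero, abs_of_nonneg hθp'] at hb3
          have hb3' : (d - ν) * (θp - bm) ≤ ν := hb3.trans hθpν.le
          nlinarith [mul_nonneg (show (0:ℝ) ≤ d - 2 * ν by linarith)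
            (show (0:ℝ) ≤ θp - bm by linarith)]
      have habs : |θp - θm| = θp - θm := by
        rw [abs_of_nonneg (by linarith [hθm.2] : (0:ℝ) ≤ θp - θm)]
      have h2 : 7 * ν / d ≤ θp - θm := by
        rw [← habs]; exact hT.trans (torusNorm_le_abs _)
      have h3 := mul_le_mul_of_nonneg_left h2 hd.le
      rw [hd7] at h3
      nlinarith [hlen, hfarp]
  · -- ν ≤ |f' θp|
    by_contra h1
    push_neg at h1
    have hsp : f' θp < ν := by
      rw [abs_of_nonneg hθp'] at h1; exact h1
    have h1' : |f' θp| ≤ ν := h1.le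
    by_cases hap : ν ≤ f' ap
    · by_cases hbp : ν ≤ f' bp
      · exact no_dip_pos d ν f' f'' ap bp θp hd hν hνd
          (fun t ht => hder2 t (Or.inr ht)) (fun t ht => hMo t (Or.inr ht))
          hpos hap hbp hθp hsp
      · -- junction max at c = bp = am
        obtain ⟨hceq, hbpbm, hc0⟩ :=
          (classify_bp am bm ap bp d ν f' f'' hlep hdisj hd hder2 hneg hpos hMo hbdry).resolve_left hbp
        have hθmc : bp ≤ θm := le_of_eq_of_le hceq hθm.1
        have hmemm : ∀ t ∈ Set.Icc bp θm, t ∈ Set.Icc am bm :=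
          fun t ht => ⟨le_of_eq_of_le hceq.symm ht.1, ht.2.trans hθm.2⟩
        have hmemp : ∀ t ∈ Set.Icc θp bp, t ∈ Set.Icc ap bp :=
          fun t ht => ⟨hθp.1.trans ht.1, ht.2⟩
        -- band on [θp, bp]
        have hband : ∀ t ∈ Set.Icc θp bp, |f' t| ≤ ν := by
          intro t ht
          rw [abs_of_nonneg (hpos t (hmemp t ht))]
          by_contra hc
          push_neg at hc
          exact no_dip_pos d ν f' f'' ap t θp hd hν hνd
            (fun u hu => hder2 u (Or.inr ⟨hu.1, hu.2.trans ht.2⟩))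
            (fun u hu => hMo u (Or.inr ⟨hu.1, hu.2.trans ht.2⟩))
            (fun u hu => hpos u ⟨hu.1, hu.2.trans ht.2⟩)
            hap hc.le ⟨hθp.1, ht.1⟩ hsp
        obtain ⟨hb1, hb2⟩ := band_bounds d ν f f' f'' θp bp hθp.2
          (fun t ht => hder1 t (Or.inr (hmemp t ht)))
          (fun t ht => hder2 t (Or.inr (hmemp t ht)))
          (fun t ht => hMo t (Or.inr (hmemp t ht))) hband
        rw [hc0, zero_sub, abs_neg] at hb1
        have hb1' : (d - ν) * (bp - θp) ≤ ν := hb1.trans h1'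
        have hlen : d * (bp - θp) ≤ 2 * ν := by
          nlinarith [mul_nonneg (show (0:ℝ) ≤ d - 2 * ν by linarith)
            (show (0:ℝ) ≤ bp - θp by linarith [hθp.2])]
        have hgap : d * (f bp - f θm) ≤ 2 * ν ^ 2 := by
          have h2 : f bp - f θp ≤ ν * (bp - θp) := by
            have := abs_le.1 hb2; linarith [this.2]
          rw [← hfmp]
          nlinarith [mul_le_mul_of_nonneg_left h2 hd.le,
            mul_le_mul_of_nonneg_left hlen hν.le]
        have hfarm : d * (θm - bp) ≤ 9 / 2 * ν := by
          by_cases hθmν : f' θm ≤ -ν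
          · exact far_right_neg d ν f f' f'' bp θm hθmc hd hν hνd
              (fun t ht => hder1 t (Or.inl (hmemm t ht)))
              (fun t ht => hder2 t (Or.inl (hmemm t ht)))
              (fun t ht => hMo t (Or.inl (hmemm t ht)))
              (fun t ht => hneg t (hmemm t ht)) hθmν hgap
          · push_neg at hθmν
            have hbm : f' bm ≤ -ν := by
              rcases classify_bm am bm ap bp d ν f' f'' hlem hdisj hd hder2 hneg hpos hMo hbdry with h | ⟨h2, h3, h4⟩
              · exact h
              · exfalso; linarith [hlem]
            have hband2 : ∀ t ∈ Set.Icc bp θm, |f' t| ≤ ν := by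
              intro t ht
              rw [abs_of_nonpos (hneg t (hmemm t ht))]
              by_contra hc
              push_neg at hc
              exact no_dip_neg d ν f' f'' t bm θm hd hν hνd
                (fun u hu => hder2 u (Or.inl ⟨(hmemm t ht).1.trans hu.1, hu.2⟩))
                (fun u hu => hMo u (Or.inl ⟨(hmemm t ht).1.trans hu.1, hu.2⟩))
                (fun u hu => hneg u ⟨(hmemm t ht).1.trans hu.1, hu.2⟩)
                (by linarith) hbm ⟨ht.2, hθm.2⟩ hθmν
            obtain ⟨hb3, -⟩ := band_bounds d ν f f' f'' bp θm hθmc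
              (fun t ht => hder1 t (Or.inl (hmemm t ht)))
              (fun t ht => hder2 t (Or.inl (hmemm t ht)))
              (fun t ht => hMo t (Or.inl (hmemm t ht))) hband2
            rw [hc0, sub_zero, abs_of_nonpos hθm'] at hb3
            have hb3' : (d - ν) * (θm - bp) ≤ ν := hb3.trans (by linarith)
            nlinarith [mul_nonneg (show (0:ℝ) ≤ d - 2 * ν by linarith)
              (show (0:ℝ) ≤ θm - bp by linarith)]
        have habs : |θp - θm| = θm - θp := by
          rw [abs_of_nonpos (by linarith [hθp.2] : θp - θm ≤ 0)]; ring
        have h2 : 7 * ν / d ≤ θm - θp := by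
          rw [← habs]; exact hT.trans (torusNorm_le_abs _)
        have h3 := mul_le_mul_of_nonneg_left h2 hd.le
        rw [hd7] at h3
        nlinarith [hlen, hfarm]
    · -- junction min at c = ap = bm
      obtain ⟨hceq, hamap, hc0⟩ :=
        (classify_ap am bm ap bp d ν f' f'' hlep hdisj hd hder2 hneg hpos hMo hbdry).resolve_left hap
      have hbp : ν ≤ f' bp := by
        rcases classify_bp am bm ap bp d ν f' f'' hlep hdisj hd hder2 hneg hpos hMo hbdry with h | ⟨h2, h3, h4⟩
        · exact h
        · exfalso; linarith [hlep]
      have hθmc : θm ≤ ap := le_of_le_of_eq hθm.2 hceq.symm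
      have hmemm : ∀ t ∈ Set.Icc θm ap, t ∈ Set.Icc am bm :=
        fun t ht => ⟨hθm.1.trans ht.1, le_of_le_of_eq ht.2 hceq⟩
      have hmemp : ∀ t ∈ Set.Icc ap θp, t ∈ Set.Icc ap bp :=
        fun t ht => ⟨ht.1, ht.2.trans hθp.2⟩
      -- band on [ap, θp]
      have hband : ∀ t ∈ Set.Icc ap θp, |f' t| ≤ ν := by
        intro t ht
        rw [abs_of_nonneg (hpos t (hmemp t ht))]
        by_contra hc
        push_neg at hc
        exact no_dip_pos d ν f' f'' t bp θp hd hν hνd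
          (fun u hu => hder2 u (Or.inr ⟨ht.1.trans hu.1, hu.2⟩))
          (fun u hu => hMo u (Or.inr ⟨ht.1.trans hu.1, hu.2⟩))
          (fun u hu => hpos u ⟨ht.1.trans hu.1, hu.2⟩)
          hc.le hbp ⟨ht.2, hθp.2⟩ hsp
      obtain ⟨hb1, hb2⟩ := band_bounds d ν f f' f'' ap θp hθp.1
        (fun t ht => hder1 t (Or.inr (hmemp t ht)))
        (fun t ht => hder2 t (Or.inr (hmemp t ht)))
        (fun t ht => hMo t (Or.inr (hmemp t ht))) hband
      rw [hc0, sub_zero] at hb1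
      have hb1' : (d - ν) * (θp - ap) ≤ ν := hb1.trans h1'
      have hlen : d * (θp - ap) ≤ 2 * ν := by
        nlinarith [mul_nonneg (show (0:ℝ) ≤ d - 2 * ν by linarith)
          (show (0:ℝ) ≤ θp - ap by linarith [hθp.1])]
      have hgap : d * (f θm - f ap) ≤ 2 * ν ^ 2 := by
        have h2 : f θp - f ap ≤ ν * (θp - ap) := by
          have := abs_le.1 hb2; linarith [this.2]
        rw [← hfmp]
        nlinarith [mul_le_mul_of_nonneg_left h2 hd.le,
          mul_le_mul_of_nonneg_left hlen hν.le]
      have hfarm : d * (ap - θm) ≤ 9 / 2 * ν := by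
        by_cases hθmν : f' θm ≤ -ν
        · exact far_left_neg d ν f f' f'' ap θm hθmc hd hν hνd
            (fun t ht => hder1 t (Or.inl (hmemm t ht)))
            (fun t ht => hder2 t (Or.inl (hmemm t ht)))
            (fun t ht => hMo t (Or.inl (hmemm t ht)))
            (fun t ht => hneg t (hmemm t ht)) hθmν hgap
        · push_neg at hθmν
          have ham : f' am ≤ -ν := by
            rcases classify_am am bm ap bp d ν f' f'' hlem hdisj hd hder2 hneg hpos hMo hbdry with h | ⟨h2, h3, h4⟩
            · exact h
            · exfalso; linarith [hlem]
          have hband2 : ∀ t ∈ Set.Icc θm ap, |f' t| ≤ ν := by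
            intro t ht
            rw [abs_of_nonpos (hneg t (hmemm t ht))]
            by_contra hc
            push_neg at hc
            exact no_dip_neg d ν f' f'' am t θm hd hν hνd
              (fun u hu => hder2 u (Or.inl ⟨hu.1, hu.2.trans (hmemm t ht).2⟩))
              (fun u hu => hMo u (Or.inl ⟨hu.1, hu.2.trans (hmemm t ht).2⟩))
              (fun u hu => hneg u ⟨hu.1, hu.2.trans (hmemm t ht).2⟩)
              ham (by linarith) ⟨hθm.1, ht.1⟩ hθmν
          obtain ⟨hb3, -⟩ := band_bounds d ν f f' f'' θm ap hθmc
            (fun t ht => hder1 t (Or.inl (hmemm t ht)))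
            (fun t ht => hder2 t (Or.inl (hmemm t ht)))
            (fun t ht => hMo t (Or.inl (hmemm t ht))) hband2
          rw [hc0, zero_sub, abs_neg, abs_of_nonpos hθm'] at hb3
          have hb3' : (d - ν) * (ap - θm) ≤ ν := hb3.trans (by linarith)
          nlinarith [mul_nonneg (show (0:ℝ) ≤ d - 2 * ν by linarith)
            (show (0:ℝ) ≤ ap - θm by linarith)]
      have habs : |θp - θm| = θp - θm := by
        rw [abs_of_nonneg (by linarith [hθp.1] : (0:ℝ) ≤ θp - θm)]
      have h2 : 7 * ν / d ≤ θp - θm := by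
        rw [← habs]; exact hT.trans (torusNorm_le_abs _)
      have h3 := mul_le_mul_of_nonneg_left h2 hd.le
      rw [hd7] at h3
      nlinarith [hlen, hfarm]
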